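/- The ideal L(E≀Ω) of the free Lie algebra L(A) on A = {y₁,…,y_n, y_{n+1}}, where Ω = {y_{n+1}} ∪ {[y_{n+1},y_i] : i ∈ [n]} and E = ({y_{n+1}}≀Y) \ Ω, is an ideal of the whole free Lie algebra L(A) (not just of L({y_{n+1}}≀Y)). -/

import Mathlib

noncomputable section

/-- Left-normed iterated Lie bracket. -/
def leftNormed {L : Type*} [LieRing L] (x : L) (l : List L) : L :=
  l.foldl (fun u v => ⁅u, v⁆) x

/-- The wreath set `C ≀ B`. -/
def wreathSet {L : Type*} [LieRing L] (C B : Set L) : Set L :=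
  {x | ∃ c ∈ C, ∃ l : List L, (∀ b ∈ l, b ∈ B) ∧ x = leftNormed c l}

variable (n : ℕ)

/-- The generator `y_{n+1}` (denoted `s`). -/
def fpS : FreeLieAlgebra ℤ (Option (Fin n)) := FreeLieAlgebra.of ℤ none

/-- The generators `y i`, `i ∈ [n]`. -/
def fpY (i : Fin n) : FreeLieAlgebra ℤ (Option (Fin n)) := FreeLieAlgebra.of ℤ (some i)

/-- `Ω = {y_{n+1}} ∪ {[y_{n+1},y_i] : i ∈ [n]}`. -/
def fpOmega : Set (FreeLieAlgebra ℤ (Option (Fin n))) :=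
  insert (fpS n) {x | ∃ i : Fin n, x = ⁅fpS n, fpY n i⁆}

/-- `E = ({y_{n+1}}≀Y) \ Ω`, the wreath elements of degree at least `3`. -/
def fpE : Set (FreeLieAlgebra ℤ (Option (Fin n))) :=
  {x | ∃ l : List (Fin n), 2 ≤ l.length ∧ x = leftNormed (fpS n) (l.map (fpY n))}

lemma leftNormed_snoc {L : Type*} [LieRing L] (x : L) (l : List L) (b : L) :
    leftNormed x (l ++ [b]) = ⁅leftNormed x l, b⁆ := by
  simp [leftNormed, List.foldl_append]

lemma lieSpan_range_of_eq_top (R : Type*) (X : Type*) [CommRing R] :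
    LieSubalgebra.lieSpan R (FreeLieAlgebra R X) (Set.range (FreeLieAlgebra.of R)) = ⊤ := by
  set K := LieSubalgebra.lieSpan R (FreeLieAlgebra R X) (Set.range (FreeLieAlgebra.of R))
  have hK : ∀ x : X, FreeLieAlgebra.of R x ∈ K := fun x =>
    LieSubalgebra.subset_lieSpan (Set.mem_range_self x)
  let F : FreeLieAlgebra R X →ₗ⁅R⁆ K := FreeLieAlgebra.lift R (fun x => ⟨FreeLieAlgebra.of R x, hK x⟩)
  have h : K.incl.comp F = LieHom.id := by
    apply FreeLieAlgebra.hom_ext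
    intro x
    simp [F, FreeLieAlgebra.lift_of_apply]
  rw [eq_top_iff]
  intro a _
  have : (K.incl.comp F) a = a := by rw [h]; rfl
  rw [← this]
  exact (F a).2

-- notation
local notation "L" => FreeLieAlgebra ℤ (Option (Fin n))

def fpI : LieSubalgebra ℤ (FreeLieAlgebra ℤ (Option (Fin n))) :=
  LieSubalgebra.lieSpan ℤ _ (wreathSet (fpE n) (fpOmega n))

lemma W_mem_I {w : FreeLieAlgebra ℤ (Option (Fin n))}
    (hw : w ∈ wreathSet (fpE n) (fpOmega n)) : w ∈ fpI n :=
  LieSubalgebra.subset_lieSpan hw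

lemma E_subset_W {e : FreeLieAlgebra ℤ (Option (Fin n))} (he : e ∈ fpE n) :
    e ∈ wreathSet (fpE n) (fpOmega n) :=
  ⟨e, he, [], by simp, rfl⟩

lemma W_snoc {w ω : FreeLieAlgebra ℤ (Option (Fin n))}
    (hw : w ∈ wreathSet (fpE n) (fpOmega n)) (hω : ω ∈ fpOmega n) :
    ⁅w, ω⁆ ∈ wreathSet (fpE n) (fpOmega n) := by
  obtain ⟨e, he, l, hl, rfl⟩ := hw
  exact ⟨e, he, l ++ [ω], by
    intro b hb
    rcases List.mem_append.1 hb with h | h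
    · exact hl b h
    · simpa using (List.mem_singleton.1 h) ▸ hω, (leftNormed_snoc e l ω).symm⟩

/-- Lemma A: `I` is closed under right-bracket by elements of `Ω`. -/
lemma I_lie_omega : ∀ x ∈ fpI n, ∀ ω ∈ fpOmega n, ⁅x, ω⁆ ∈ fpI n := by
  let T : LieSubalgebra ℤ (FreeLieAlgebra ℤ (Option (Fin n))) :=
    { carrier := {x | x ∈ fpI n ∧ ∀ ω ∈ fpOmega n, ⁅x, ω⁆ ∈ fpI n}
      add_mem' := by
        rintro x y ⟨hx, hx'⟩ ⟨hy, hy'⟩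
        exact ⟨add_mem hx hy, fun ω hω => by
          rw [add_lie]; exact add_mem (hx' ω hω) (hy' ω hω)⟩
      zero_mem' := ⟨zero_mem _, fun ω hω => by rw [zero_lie]; exact zero_mem _⟩
      smul_mem' := by
        rintro t x ⟨hx, hx'⟩
        exact ⟨(fpI n).toSubmodule.smul_mem t hx, fun ω hω => by
          rw [smul_lie]; exact (fpI n).toSubmodule.smul_mem t (hx' ω hω)⟩
      lie_mem' := by
        rintro x y ⟨hx, hx'⟩ ⟨hy, hy'⟩
        refine ⟨(fpI n).lie_mem hx hy, fun ω hω => ?_⟩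
        rw [lie_lie]
        exact sub_mem ((fpI n).lie_mem hx (hy' ω hω)) ((fpI n).lie_mem hy (hx' ω hω)) }
  have hle : fpI n ≤ T := by
    rw [fpI, LieSubalgebra.lieSpan_le]
    intro w hw
    exact ⟨W_mem_I n hw, fun ω hω => W_mem_I n (W_snoc n hw hω)⟩
  intro x hx
  exact (hle hx).2

/-- Lemma B: brackets of generators with wreath elements lie in `I`. -/
lemma gen_lie_W : ∀ w ∈ wreathSet (fpE n) (fpOmega n), ∀ a : Option (Fin n),
    ⁅FreeLieAlgebra.of ℤ a, w⁆ ∈ fpI n := by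
  rintro w ⟨e, he, l, hl, rfl⟩
  induction l using List.reverseRecOn with
  | nil =>
    intro a
    obtain ⟨m, hm, rfl⟩ := he
    cases a with
    | none =>
      rw [← lie_skew, ← fpS]
      refine neg_mem (W_mem_I n (W_snoc n (E_subset_W n ⟨m, hm, rfl⟩) ?_))
      exact Or.inl rfl
    | some j =>
      rw [← lie_skew, ← fpY]
      refine neg_mem (W_mem_I n (E_subset_W n ?_))
      refine ⟨m ++ [j], by simp; omega, ?_⟩
      simp [List.map_append, leftNormed_snoc, leftNormed]
  | append_singleton l' ω ih =>
    intro a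
    have hω : ω ∈ fpOmega n := hl ω (by simp)
    have hl' : ∀ b ∈ l', b ∈ fpOmega n := fun b hb => hl b (by simp [hb])
    have ih' := ih hl'
    set w' := leftNormed e l' with hw'
    have hw'W : w' ∈ wreathSet (fpE n) (fpOmega n) := ⟨e, he, l', hl', rfl⟩
    have hw'I : w' ∈ fpI n := W_mem_I n hw'W
    rw [leftNormed_snoc, leibniz_lie]
    refine add_mem (I_lie_omega n _ (ih' a) ω hω) ?_
    -- second term : ⁅w', ⁅of a, ω⁆⁆
    cases a with
    | none =>
      -- ⁅s, ω⁆ = -⁅ω, s⁆ ; ⁅w', ⁅ω, s⁆⁆ = ⁅⁅w',ω⁆,s⁆ + ⁅ω,⁅w',s⁆⁆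
      have hs : fpS n ∈ fpOmega n := Or.inl rfl
      have key : ⁅w', ⁅ω, fpS n⁆⁆ ∈ fpI n := by
        rw [leibniz_lie]
        refine add_mem (I_lie_omega n _ (I_lie_omega n _ hw'I ω hω) _ hs) ?_
        rw [← lie_skew]
        exact neg_mem (I_lie_omega n _ (I_lie_omega n _ hw'I _ hs) ω hω)
      have : (⁅FreeLieAlgebra.of ℤ (none : Option (Fin n)), ω⁆ :
          FreeLieAlgebra ℤ (Option (Fin n))) = -⁅ω, fpS n⁆ := by
        rw [lie_skew]; rfl
      rw [this, lie_neg]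
      exact neg_mem key
    | some j =>
      have : (⁅FreeLieAlgebra.of ℤ (some j : Option (Fin n)), ω⁆ :
          FreeLieAlgebra ℤ (Option (Fin n))) = -⁅ω, fpY n j⁆ := by
        rw [lie_skew]; rfl
      rw [this, lie_neg]
      refine neg_mem ?_
      rcases hω with h | ⟨i, h⟩
      · -- ω = s : ⁅s, y_j⁆ ∈ Ω
        subst h
        exact I_lie_omega n _ hw'I _ (Or.inr ⟨j, rfl⟩)
      · -- ω = ⁅s, y_i⁆ : ⁅ω, y_j⁆ ∈ E
        subst h
        refine (fpI n).lie_mem hw'I (W_mem_I n (E_subset_W n ?_))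
        exact ⟨[i, j], by simp, by simp [leftNormed]⟩

/-- **Proposition 4.2(3).** The subalgebra `L(E≀Ω)` is an ideal of the whole free Lie
algebra `L(A)` on `A = {y₁,…,y_n, y_{n+1}}` (not just of `L({y_{n+1}}≀Y)`). -/
theorem wreath_subalgebra_is_ideal (hn : 2 ≤ n)
    (z : FreeLieAlgebra ℤ (Option (Fin n))) (x : FreeLieAlgebra ℤ (Option (Fin n)))
    (hx : x ∈ LieSubalgebra.lieSpan ℤ _ (wreathSet (fpE n) (fpOmega n))) :
    ⁅z, x⁆ ∈ LieSubalgebra.lieSpan ℤ _ (wreathSet (fpE n) (fpOmega n)) := by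
  -- Lemma C : generators bracket I into I
  have hC : ∀ a : Option (Fin n), ∀ x ∈ fpI n, ⁅FreeLieAlgebra.of ℤ a, x⁆ ∈ fpI n := by
    let S : LieSubalgebra ℤ (FreeLieAlgebra ℤ (Option (Fin n))) :=
      { carrier := {x | x ∈ fpI n ∧ ∀ a : Option (Fin n), ⁅FreeLieAlgebra.of ℤ a, x⁆ ∈ fpI n}
        add_mem' := by
          rintro u v ⟨hu, hu'⟩ ⟨hv, hv'⟩
          exact ⟨add_mem hu hv, fun a => by rw [lie_add]; exact add_mem (hu' a) (hv' a)⟩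
        zero_mem' := ⟨zero_mem _, fun a => by rw [lie_zero]; exact zero_mem _⟩
        smul_mem' := by
          rintro t u ⟨hu, hu'⟩
          exact ⟨(fpI n).toSubmodule.smul_mem t hu, fun a => by
            rw [lie_smul]; exact (fpI n).toSubmodule.smul_mem t (hu' a)⟩
        lie_mem' := by
          rintro u v ⟨hu, hu'⟩ ⟨hv, hv'⟩
          refine ⟨(fpI n).lie_mem hu hv, fun a => ?_⟩
          rw [leibniz_lie]
          exact add_mem ((fpI n).lie_mem (hu' a) hv) ((fpI n).lie_mem hu (hv' a)) }
    have hle : fpI n ≤ S := by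
      rw [fpI, LieSubalgebra.lieSpan_le]
      intro w hw
      exact ⟨W_mem_I n hw, fun a => gen_lie_W n w hw a⟩
    intro a x hx
    exact (hle hx).2 a
  -- Lemma D : all of L brackets I into I
  let U : LieSubalgebra ℤ (FreeLieAlgebra ℤ (Option (Fin n))) :=
    { carrier := {z | ∀ x ∈ fpI n, ⁅z, x⁆ ∈ fpI n}
      add_mem' := fun hu hv x hx => by rw [add_lie]; exact add_mem (hu x hx) (hv x hx)
      zero_mem' := fun x hx => by rw [zero_lie]; exact zero_mem _
      smul_mem' := fun t u hu x hx => by rw [smul_lie]; exact (fpI n).toSubmodule.smul_mem t (hu x hx)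
      lie_mem' := by
        intro u v hu hv x hx
        rw [lie_lie]
        exact sub_mem (hu _ (hv x hx)) (hv _ (hu x hx)) }
  have hU : Set.range (FreeLieAlgebra.of ℤ (X := Option (Fin n))) ⊆ U := by
    rintro _ ⟨a, rfl⟩
    exact fun x hx => hC a x hx
  have htop : (⊤ : LieSubalgebra ℤ (FreeLieAlgebra ℤ (Option (Fin n)))) ≤ U := by
    refine le_trans (lieSpan_range_of_eq_top ℤ (Option (Fin n))).ge ?_
    exact LieSubalgebra.lieSpan_le.2 hU
  have hz : z ∈ U := htop trivial
  exact hz x hx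


end
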